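/- For every real c > 3/2, the number x = (1/2)·√(3/(2c)) / cos((1/3)·arccos((3/(2c))^{3/2})) satisfies x > 0 and 1/(2x²) − x = c; i.e. the unique positive solution of 1/(2x²) − x = c is L_R(c) = (1/2)√(3/(2c)) sec((1/3) arccos((3/(2c))^{3/2})). -/

import Mathlib

/-- For every `c > 3/2`, the number
`x = (1/2)√(3/(2c)) · sec((1/3) arccos((3/(2c))^{3/2}))`
is positive and solves `1/(2x²) − x = c`; i.e. it is the positive root
`L_R(c)` of the rotating Kepler problem. -/
theorem LR_explicit_formula (c : ℝ) (hc : 3/2 < c) :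
    let x : ℝ := (1/2) * Real.sqrt (3/(2*c)) /
      Real.cos ((1/3) * Real.arccos ((3/(2*c)) ^ ((3:ℝ)/2)))
    0 < x ∧ 1/(2*x^2) - x = c := by
  intro x
  have hc0 : (0:ℝ) < c := by linarith
  set a : ℝ := 3/(2*c) with ha
  have ha0 : 0 < a := by positivity
  have ha1 : a < 1 := by
    rw [ha, div_lt_one (by linarith)]; linarith
  set s : ℝ := Real.sqrt a with hsdef
  have hs0 : 0 < s := Real.sqrt_pos.mpr ha0
  have hs2 : s ^ 2 = a := Real.sq_sqrt ha0.le
  have hs3 : s ^ 3 = a ^ ((3:ℝ)/2) := by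
    rw [hsdef, Real.sqrt_eq_rpow, ← Real.rpow_natCast (a ^ ((1:ℝ)/2)) 3,
      ← Real.rpow_mul ha0.le]
    norm_num
  set θ := Real.arccos (a ^ ((3:ℝ)/2)) with hθ
  have hmem1 : (-1:ℝ) ≤ a ^ ((3:ℝ)/2) := le_trans (by norm_num) (Real.rpow_nonneg ha0.le _)
  have hmem2 : a ^ ((3:ℝ)/2) ≤ 1 := Real.rpow_le_one ha0.le ha1.le (by norm_num)
  have hcosθ : Real.cos θ = a ^ ((3:ℝ)/2) := Real.cos_arccos hmem1 hmem2
  have hθ0 : 0 ≤ θ := Real.arccos_nonneg _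
  have hθπ : θ ≤ Real.pi := Real.arccos_le_pi _
  have hpi := Real.pi_pos
  set u : ℝ := Real.cos ((1/3) * θ) with hu
  have hu0 : 0 < u := by
    apply Real.cos_pos_of_mem_Ioo
    constructor <;> [nlinarith; nlinarith]
  have htriple : 4 * u ^ 3 - 3 * u = s ^ 3 := by
    have h3 : (3:ℝ) * ((1/3) * θ) = θ := by ring
    have := Real.cos_three_mul ((1/3) * θ)
    rw [h3, hcosθ] at this
    rw [hu, hs3, this]
  have hx : x = (1/2) * s / u := rfl
  have hx0 : 0 < x := by rw [hx]; positivity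
  refine ⟨hx0, ?_⟩
  have hac : a * (2 * c) = 3 := by
    rw [ha]; field_simp
  rw [hx]
  rw [div_pow]
  have hu2 : u ^ 2 ≠ 0 := by positivity
  field_simp
  linear_combination htriple - 2*c*u*hs2 - u*hac
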